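/- Let R be a commutative ring, P₀ a finitely generated projective R-module of rank 2, n ≥ 4, and P_n = P₀ ⊕ Re₃ ⊕ ⋯ ⊕ Re_n. Let a = (a₀, a₃, a₄, …, a_n) ∈ Um(P_n) and k ∈ ℕ. Consider the R[T]-linear map f(T) = (a₀ ⊗ 1, a₃^k, a₄ + T·a₃, a₅, …, a_n) : P_n ⊗_R R[T] → R[T], obtained by base change of the coordinates of a and replacing the e₃-coordinate by a₃^k and the e₄-coordinate by a₄ + T·a₃. Then f(T) is surjective, and there exists an R[T]-linear automorphism φ of P_n ⊗_R R[T] such that f(T) = f(0) ∘ φ, where f(0) is the base change to R[T] of (a₀, a₃^k, a₄, a₅, …, a_n) : P_n → R. -/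
import Mathlib


open Function

section Defs

variable (R : Type*) [CommRing R] (M : Type*) [AddCommGroup M] [Module R M] (m : ℕ)

/-- `Pn R M m` models `P_n = P₀ ⊕ Re₃ ⊕ ⋯ ⊕ Re_n` with `m = n - 2` free summands. -/
abbrev Pn := M × (Fin m → R)

/-- Projection onto `P₀`. -/
def proj0 : Pn R M m →ₗ[R] M := LinearMap.fst R M (Fin m → R)

/-- Projection `π_{k,n}` onto the `i`-th free summand. -/
def projF (i : Fin m) : Pn R M m →ₗ[R] R :=
  (LinearMap.proj i).comp (LinearMap.snd R M (Fin m → R))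

/-- Inclusion of `P₀`. -/
def incl0 : M →ₗ[R] Pn R M m := LinearMap.inl R M (Fin m → R)

/-- Inclusion of the `i`-th free summand. -/
def inclF (i : Fin m) : R →ₗ[R] Pn R M m :=
  (LinearMap.inr R M (Fin m → R)).comp (LinearMap.single R (fun _ => R) i)

/-- An endomorphism is elementary if it is `id + s` where `s` maps one direct
summand of `P₀ ⊕ Re₃ ⊕ ⋯ ⊕ Re_n` into a different one. -/
def IsElementary (φ : Module.End R (Pn R M m)) : Prop :=
  (∃ i : Fin m, ∃ t : M →ₗ[R] R, φ = LinearMap.id + (inclF R M m i) ∘ₗ t ∘ₗ (proj0 R M m)) ∨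
  (∃ i : Fin m, ∃ t : R →ₗ[R] M, φ = LinearMap.id + (incl0 R M m) ∘ₗ t ∘ₗ (projF R M m i)) ∨
  (∃ i j : Fin m, i ≠ j ∧ ∃ t : R →ₗ[R] R,
    φ = LinearMap.id + (inclF R M m i) ∘ₗ t ∘ₗ (projF R M m j))

/-- `E(P_n)`: the subgroup of `Aut(P_n)` generated by elementary automorphisms. -/
def Elem : Subgroup (Module.End R (Pn R M m))ˣ :=
  Subgroup.closure { φ : (Module.End R (Pn R M m))ˣ | IsElementary R M m ↑φ }

/-- The `i`-th free coordinate `a_i = a(e_i)` of a linear map `a : P_n → R`. -/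
def coord (a : Pn R M m →ₗ[R] R) (i : Fin m) : R := a (inclF R M m i 1)

/-- The map obtained from `a` by replacing its `i`-th free coordinate by `c`. -/
def replace (a : Pn R M m →ₗ[R] R) (i : Fin m) (c : R) : Pn R M m →ₗ[R] R :=
  a + (c - coord R M m a i) • projF R M m i

/-- A module has rank two if its localization at every prime has rank two. -/
def RankTwo : Prop :=
  ∀ (p : Ideal R) (_ : p.IsPrime),
    Module.finrank (Localization.AtPrime p) (LocalizedModule p.primeCompl M) = 2

/-- Given `b = (b₀, b₃) : P₃ → R` and `a : P_n → R`, the map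
`(b₀, b₃, a₄, …, a_n) : P_n → R`. -/
def combine (h : 0 < m) (b : M × R →ₗ[R] R) (a : Pn R M m →ₗ[R] R) :
    Pn R M m →ₗ[R] R :=
  b ∘ₗ (LinearMap.prod (proj0 R M m) (projF R M m ⟨0, h⟩)) +
    ∑ i ∈ Finset.univ.erase (⟨0, h⟩ : Fin m), coord R M m a i • projF R M m i

end Defs

open TensorProduct

section BaseChange

variable (R : Type*) [CommRing R] (M : Type*) [AddCommGroup M] [Module R M] (m : ℕ)

/-- The base change to `R[T]` of an `R`-linear map `P_n → R`, viewed as an `R[T]`-linear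
map `P_n ⊗[R] R[T] → R[T]`. -/
noncomputable def bcMap (g : Pn R M m →ₗ[R] R) :
    Polynomial R ⊗[R] Pn R M m →ₗ[Polynomial R] Polynomial R :=
  (Algebra.TensorProduct.rid R (Polynomial R) (Polynomial R)).toLinearEquiv.toLinearMap ∘ₗ
    g.baseChange (Polynomial R)

/-- `f(T) = (a₀ ⊗ 1, a₃^k, a₄ + T·a₃, a₅, …, a_n) : P_n ⊗[R] R[T] → R[T]`: the base
change of `(a₀, a₃^k, a₄, …, a_n)` plus `T` times the base change of the map
`(p, v) ↦ a₃ · v₄`. -/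
noncomputable def fT (h0 : 0 < m) (h1 : 1 < m) (a : Pn R M m →ₗ[R] R) (k : ℕ) :
    Polynomial R ⊗[R] Pn R M m →ₗ[Polynomial R] Polynomial R :=
  bcMap R M m (replace R M m a ⟨0, h0⟩ ((coord R M m a ⟨0, h0⟩) ^ k)) +
    (Polynomial.X : Polynomial R) • bcMap R M m ((coord R M m a ⟨0, h0⟩) • projF R M m ⟨1, h1⟩)

end BaseChange

section Aux

variable {R : Type*} [CommRing R] {M : Type*} [AddCommGroup M] [Module R M] {m : ℕ}

lemma projF_inclF_same (i : Fin m) (r : R) : projF R M m i (inclF R M m i r) = r := by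
  simp [projF, inclF]

lemma projF_inclF_ne {i j : Fin m} (h : j ≠ i) (r : R) : projF R M m i (inclF R M m j r) = 0 := by
  simp [projF, inclF, Pi.single_eq_of_ne h.symm]

lemma replace_apply' (a : Pn R M m →ₗ[R] R) (i : Fin m) (c : R) (y : Pn R M m) :
    replace R M m a i c y = a y + (c - coord R M m a i) * projF R M m i y := by
  simp [replace, smul_eq_mul]

lemma bcMap_tmul (g : Pn R M m →ₗ[R] R) (p : Polynomial R) (y : Pn R M m) :
    bcMap R M m g (p ⊗ₜ[R] y) = p * Polynomial.C (g y) := by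
  simp [bcMap, Polynomial.smul_eq_C_mul, mul_comm]

lemma qext {W : Type*} [AddCommGroup W] [Module (Polynomial R) W]
    (f g : Polynomial R ⊗[R] Pn R M m →ₗ[Polynomial R] W)
    (h : ∀ y : Pn R M m, f (1 ⊗ₜ[R] y) = g (1 ⊗ₜ[R] y)) : f = g := by
  apply LinearMap.ext; intro q
  induction q using TensorProduct.induction_on with
  | zero => simp
  | tmul p y =>
      have hp : (p ⊗ₜ[R] y : Polynomial R ⊗[R] Pn R M m) = p • ((1 : Polynomial R) ⊗ₜ[R] y) := by
        rw [TensorProduct.smul_tmul', smul_eq_mul, mul_one]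
      rw [hp, map_smul, map_smul, h]
  | add x y hx hy => rw [map_add, map_add, hx, hy]

theorem det_key {A : Type*} [CommRing A] (α β z₃ z₄ ξ ζ T E G Γ H P Ps Pz PT Pt : A)
    (hE : β*z₄*E = Ps - P*Pz)
    (hG : (1 + T*α*ξ)*G = 1 - PT*P)
    (hΓ : (1 - (α*z₃ + β*z₄))*Γ = 1 - Ps)
    (hH : (1 + T*(α*(-(z₄*E*ξ*G)))*β)*H = 1 - Pt*P) :
    (1 + T*α*ξ
       - (T*ξ*α*Pz + T*(α*z₄*E)*ξ*β*PT + T^2*α^2*(-(z₄*E*ξ*G))*ζ + Pt*(T*ξ*Γ*α*(1 - (α*z₃ + β*z₄))))*P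
       - (T*ξ*Γ*α*H)*(1 - (α*z₃ + β*z₄)))
     * (1 + T*(α*(-(z₄*E*ξ*G)))*β)
    - (-(T*(α*(-(z₄*E*ξ*G)))*P)) * (T*α*ζ
       + (T*ξ*α*Pz + T*(α*z₄*E)*ξ*β*PT + T^2*α^2*(-(z₄*E*ξ*G))*ζ + Pt*(T*ξ*Γ*α*(1 - (α*z₃ + β*z₄))))*β)
    = 1 := by
  linear_combination (-(T*ξ*α))*hE + (-(T*β*α*z₄*E*ξ))*hG + (-(T*ξ*α))*hΓ
    + (-(T*ξ*Γ*α*(1 - (α*z₃ + β*z₄))))*hH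

end Aux

set_option maxHeartbeats 1000000

/-- Let `R` be a commutative ring, `P₀` a finitely generated projective
`R`-module of rank `2`, `n ≥ 4` and `P_n = P₀ ⊕ Re₃ ⊕ ⋯ ⊕ Re_n`. Let
`a = (a₀, a₃, a₄, …, a_n) : P_n → R` be surjective and `k ∈ ℕ`. Then the `R[T]`-linear map
`f(T) = (a₀ ⊗ 1, a₃^k, a₄ + T·a₃, a₅, …, a_n) : P_n ⊗[R] R[T] → R[T]` is surjective and
there is an `R[T]`-linear automorphism `φ` of `P_n ⊗[R] R[T]` with `f(T) = f(0) ∘ φ`,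
where `f(0)` is the base change of `(a₀, a₃^k, a₄, …, a_n)`. -/
theorem statement10 (R : Type*) [CommRing R] (P₀ : Type*) [AddCommGroup P₀] [Module R P₀]
    [Module.Finite R P₀] [Module.Projective R P₀] (hrank : RankTwo R P₀)
    (n : ℕ) (hn : 4 ≤ n) (a : Pn R P₀ (n - 2) →ₗ[R] R) (ha : Function.Surjective a)
    (k : ℕ) :
    Function.Surjective (fT R P₀ (n - 2) (by omega) (by omega) a k) ∧
      ∃ φ : Polynomial R ⊗[R] Pn R P₀ (n - 2) ≃ₗ[Polynomial R]
          Polynomial R ⊗[R] Pn R P₀ (n - 2),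
        fT R P₀ (n - 2) (by omega) (by omega) a k =
          (bcMap R P₀ (n - 2)
              (replace R P₀ (n - 2) a ⟨0, by omega⟩ ((coord R P₀ (n - 2) a ⟨0, by omega⟩) ^ k)))
            ∘ₗ (φ : Polynomial R ⊗[R] Pn R P₀ (n - 2) →ₗ[Polynomial R]
              Polynomial R ⊗[R] Pn R P₀ (n - 2)) := by
  have h0 : 0 < n - 2 := by omega
  have h1 : 1 < n - 2 := by omega
  obtain ⟨xa, hxa⟩ := ha 1
  obtain ⟨i₀, hi₀⟩ : ∃ x : Fin (n-2), x = ⟨0, h0⟩ := ⟨_, rfl⟩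
  obtain ⟨i₁, hi₁⟩ : ∃ x : Fin (n-2), x = ⟨1, h1⟩ := ⟨_, rfl⟩
  have hne : i₀ ≠ i₁ := by
    rw [hi₀, hi₁]
    simp only [ne_eq, Fin.mk.injEq]
    omega
  obtain ⟨α, hα⟩ : ∃ x : R, x = coord R P₀ (n-2) a i₀ := ⟨_, rfl⟩
  obtain ⟨a4, ha4⟩ : ∃ x : R, x = coord R P₀ (n-2) a i₁ := ⟨_, rfl⟩
  obtain ⟨b, hb⟩ : ∃ x, x = replace R P₀ (n-2) a i₀ (α^k) := ⟨_, rfl⟩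
  obtain ⟨e3, he3⟩ : ∃ x, x = inclF R P₀ (n-2) i₀ 1 := ⟨_, rfl⟩
  obtain ⟨e4, he4⟩ : ∃ x, x = inclF R P₀ (n-2) i₁ 1 := ⟨_, rfl⟩
  obtain ⟨z3, hz3⟩ : ∃ x : R, x = projF R P₀ (n-2) i₀ xa := ⟨_, rfl⟩
  obtain ⟨z4, hz4⟩ : ∃ x : R, x = projF R P₀ (n-2) i₁ xa := ⟨_, rfl⟩
  obtain ⟨gR, hgR⟩ : ∃ x : R, x = 1 - (α*z3 + a4*z4) := ⟨_, rfl⟩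
  -- R-level evaluation facts
  have hae3 : a e3 = α := by rw [he3, hα]; rfl
  have hae4 : a e4 = a4 := by rw [he4, ha4]; rfl
  have hbe3 : b e3 = α^k := by
    rw [hb, replace_apply', he3, projF_inclF_same, ← hα, ← he3, hae3]; ring
  have hbe4 : b e4 = a4 := by
    rw [hb, replace_apply', he4, projF_inclF_ne hne.symm, ← hα, ← he4, hae4]; ring
  obtain ⟨yg, hyg⟩ : ∃ x, x = xa - z3 • e3 - z4 • e4 := ⟨_, rfl⟩
  have hp3yg : projF R P₀ (n-2) i₀ yg = 0 := by
    rw [hyg]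
    simp only [map_sub, map_smul, smul_eq_mul, he3, he4, projF_inclF_same,
      projF_inclF_ne hne.symm, ← hz3]
    ring
  have hp4yg : projF R P₀ (n-2) i₁ yg = 0 := by
    rw [hyg]
    simp only [map_sub, map_smul, smul_eq_mul, he3, he4, projF_inclF_same,
      projF_inclF_ne hne, ← hz4]
    ring
  have hbyg : b yg = gR := by
    have h' : b yg = a yg + (α^k - α) * projF R P₀ (n-2) i₀ yg := by
      rw [hb, replace_apply', ← hα]
    rw [h', hp3yg, hyg]
    simp only [map_sub, map_smul, smul_eq_mul, hae3, hae4, hxa, hgR]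
    ring
  -- the element x' with b x' = 1
  obtain ⟨x', hx'⟩ : ∃ x, x = (∑ i ∈ Finset.range k, (z3*α)^i) • (xa - z3 • e3) + (z3^k) • e3 :=
    ⟨_, rfl⟩
  have hbx' : b x' = 1 := by
    have hby : b (xa - z3 • e3) = 1 - z3*α := by
      have hbxa : b xa = a xa + (α^k - α) * z3 := by rw [hb, replace_apply', ← hα, ← hz3]
      rw [map_sub, map_smul, smul_eq_mul, hbxa, hbe3, hxa]; ring
    rw [hx', map_add, map_smul, map_smul, smul_eq_mul, smul_eq_mul, hby, hbe3]
    have hgs := geom_sum_mul (z3*α) k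
    rw [mul_pow] at hgs
    linear_combination -hgs
  obtain ⟨w, hw⟩ : ∃ x, x = a4 • e3 - (α^k) • e4 := ⟨_, rfl⟩
  obtain ⟨κp, hκp⟩ : ∃ x, x = a4 • yg - gR • e4 := ⟨_, rfl⟩
  have hbw : b w = 0 := by
    rw [hw, map_sub, map_smul, map_smul, smul_eq_mul, smul_eq_mul, hbe3, hbe4]; ring
  have hbκ : b κp = 0 := by
    rw [hκp, map_sub, map_smul, map_smul, smul_eq_mul, smul_eq_mul, hbyg, hbe4]; ring
  -- R-level projection values
  have hp4w : projF R P₀ (n-2) i₁ w = -(α^k) := by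
    rw [hw]
    simp only [map_sub, map_smul, smul_eq_mul, he3, he4, projF_inclF_same,
      projF_inclF_ne hne]
    ring
  have hp3w : projF R P₀ (n-2) i₀ w = a4 := by
    rw [hw]
    simp only [map_sub, map_smul, smul_eq_mul, he3, he4, projF_inclF_same,
      projF_inclF_ne hne.symm]
    ring
  have hp4κ : projF R P₀ (n-2) i₁ κp = -gR := by
    rw [hκp]
    simp only [map_sub, map_smul, smul_eq_mul, he4, projF_inclF_same, hp4yg]
    ring
  have hp3κ : projF R P₀ (n-2) i₀ κp = 0 := by
    rw [hκp]
    simp only [map_sub, map_smul, smul_eq_mul, he4, projF_inclF_ne hne.symm, hp3yg]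
    ring
  -- S-level scalars
  obtain ⟨α', hα'⟩ : ∃ x, x = Polynomial.C (R := R) α := ⟨_, rfl⟩
  obtain ⟨β', hβ'⟩ : ∃ x, x = Polynomial.C (R := R) a4 := ⟨_, rfl⟩
  obtain ⟨z3', hz3'⟩ : ∃ x, x = Polynomial.C (R := R) z3 := ⟨_, rfl⟩
  obtain ⟨z4', hz4'⟩ : ∃ x, x = Polynomial.C (R := R) z4 := ⟨_, rfl⟩
  obtain ⟨ξ', hξ'⟩ : ∃ x, x = Polynomial.C (R := R) (projF R P₀ (n-2) i₁ x') := ⟨_, rfl⟩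
  obtain ⟨ζ', hζ'⟩ : ∃ x, x = Polynomial.C (R := R) (projF R P₀ (n-2) i₀ x') := ⟨_, rfl⟩
  have hCg : Polynomial.C (R := R) gR = 1 - (α'*z3' + β'*z4') := by
    rw [hgR, map_sub, map_add, map_mul, map_mul, map_one, ← hα', ← hβ', ← hz3', ← hz4']
  obtain ⟨E, hE0⟩ : ∃ x, x = ∑ i ∈ Finset.range k, (α'*z3'+β'*z4')^i * (α'*z3')^(k-1-i) :=
    ⟨_, rfl⟩
  obtain ⟨G, hG0⟩ : ∃ x, x = ∑ j ∈ Finset.range k, (-(Polynomial.X*α'*ξ'))^j := ⟨_, rfl⟩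
  obtain ⟨Γ', hΓ0⟩ : ∃ x, x = ∑ i ∈ Finset.range k, (α'*z3'+β'*z4')^i := ⟨_, rfl⟩
  obtain ⟨t0, ht0⟩ : ∃ x, x = -(z4'*E*ξ'*G) := ⟨_, rfl⟩
  obtain ⟨t, ht⟩ : ∃ x, x = α'*t0 := ⟨_, rfl⟩
  obtain ⟨H, hH0⟩ : ∃ x, x = ∑ j ∈ Finset.range k, (-(Polynomial.X*t*β'))^j := ⟨_, rfl⟩
  obtain ⟨cS, hcS⟩ : ∃ x, x = Polynomial.X*ξ'*α'*z3'^k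
      + Polynomial.X*(α'*z4'*E)*ξ'*β'*(-(Polynomial.X*ξ'))^k
      + Polynomial.X^2*α'^2*t0*ζ'
      + (-(Polynomial.X*t0*β'))^k*(Polynomial.X*ξ'*Γ'*α'*(1 - (α'*z3' + β'*z4'))) := ⟨_, rfl⟩
  obtain ⟨dS, hdS⟩ : ∃ x, x = Polynomial.X*ξ'*Γ'*α'*H := ⟨_, rfl⟩
  -- the geometric-sum identities
  have hgE : β'*z4'*E = (α'*z3'+β'*z4')^k - α'^k*z3'^k := by
    have h := geom_sum₂_mul (α'*z3'+β'*z4') (α'*z3') k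
    rw [← hE0, mul_pow] at h
    linear_combination h
  have hgG : (1 + Polynomial.X*α'*ξ')*G = 1 - (-(Polynomial.X*ξ'))^k*α'^k := by
    have h := geom_sum_mul (-(Polynomial.X*α'*ξ')) k
    rw [← hG0, show (-(Polynomial.X*α'*ξ')) = (-(Polynomial.X*ξ'))*α' by ring, mul_pow] at h
    linear_combination -h
  have hgΓ : (1 - (α'*z3' + β'*z4'))*Γ' = 1 - (α'*z3'+β'*z4')^k := by
    have h := geom_sum_mul (α'*z3'+β'*z4') k
    rw [← hΓ0] at h
    linear_combination -h
  have hgH : (1 + Polynomial.X*t*β')*H = 1 - (-(Polynomial.X*t0*β'))^k*α'^k := by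
    have h := geom_sum_mul (-(Polynomial.X*t*β')) k
    rw [← hH0, show (-(Polynomial.X*t*β')) = (-(Polynomial.X*t0*β'))*α' by rw [ht]; ring,
      mul_pow] at h
    linear_combination -h + (Polynomial.X*H*β')*ht
  -- Q-level elements and maps
  obtain ⟨uQ, huQ⟩ : ∃ x, x = (Polynomial.X*α') • ((1:Polynomial R) ⊗ₜ[R] x')
      + cS • ((1:Polynomial R) ⊗ₜ[R] w) + dS • ((1:Polynomial R) ⊗ₜ[R] κp) := ⟨_, rfl⟩
  obtain ⟨vQ, hvQ⟩ : ∃ x, x = (Polynomial.X*t) • ((1:Polynomial R) ⊗ₜ[R] w) := ⟨_, rfl⟩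
  obtain ⟨π4, hπ4⟩ : ∃ x, x = bcMap R P₀ (n-2) (projF R P₀ (n-2) i₁) := ⟨_, rfl⟩
  obtain ⟨π3, hπ3⟩ : ∃ x, x = bcMap R P₀ (n-2) (projF R P₀ (n-2) i₀) := ⟨_, rfl⟩
  obtain ⟨bcb, hbcb⟩ : ∃ x, x = bcMap R P₀ (n-2) b := ⟨_, rfl⟩
  -- values of the functionals
  have hp4u : π4 uQ = Polynomial.X*α'*ξ' - cS*α'^k - dS*(1 - (α'*z3' + β'*z4')) := by
    rw [huQ, map_add, map_add, map_smul, map_smul, map_smul, smul_eq_mul, smul_eq_mul,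
      smul_eq_mul, hπ4, bcMap_tmul, bcMap_tmul, bcMap_tmul, one_mul, one_mul, one_mul,
      ← hξ', hp4w, hp4κ, map_neg, map_neg, map_pow, ← hα', hCg]
    ring
  have hp3u : π3 uQ = Polynomial.X*α'*ζ' + cS*β' := by
    rw [huQ, map_add, map_add, map_smul, map_smul, map_smul, smul_eq_mul, smul_eq_mul,
      smul_eq_mul, hπ3, bcMap_tmul, bcMap_tmul, bcMap_tmul, one_mul, one_mul, one_mul,
      ← hζ', hp3w, hp3κ, ← hβ', map_zero]
    ring
  have hp4v : π4 vQ = -(Polynomial.X*t*α'^k) := by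
    rw [hvQ, map_smul, smul_eq_mul, hπ4, bcMap_tmul, one_mul, hp4w, map_neg, map_pow, ← hα']
    ring
  have hp3v : π3 vQ = Polynomial.X*t*β' := by
    rw [hvQ, map_smul, smul_eq_mul, hπ3, bcMap_tmul, one_mul, hp3w, ← hβ']
  have hbcu : bcb uQ = Polynomial.X*α' := by
    rw [huQ, map_add, map_add, map_smul, map_smul, map_smul, smul_eq_mul, smul_eq_mul,
      smul_eq_mul, hbcb, bcMap_tmul, bcMap_tmul, bcMap_tmul, one_mul, one_mul, one_mul,
      hbx', hbw, hbκ, map_one, map_zero]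
    ring
  have hbcv : bcb vQ = 0 := by
    rw [hvQ, map_smul, smul_eq_mul, hbcb, bcMap_tmul, one_mul, hbw, map_zero]
    ring
  -- the determinant identity
  have hdet : (1 + π4 uQ) * (1 + π3 vQ) - π4 vQ * π3 uQ = 1 := by
    rw [hp4u, hp3u, hp4v, hp3v, hcS, hdS, ht, ht0]
    linear_combination det_key α' β' z3' z4' ξ' ζ' Polynomial.X E G Γ' H (α'^k)
      ((α'*z3'+β'*z4')^k) (z3'^k) ((-(Polynomial.X*ξ'))^k)
      ((-(Polynomial.X*(-(z4'*E*ξ'*G))*β'))^k) hgE hgG hgΓ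
      (by rw [← ht0, ← ht]; exact hgH)
  -- the automorphism
  obtain ⟨F, hF⟩ : ∃ x, x = (LinearMap.id : Polynomial R ⊗[R] Pn R P₀ (n-2) →ₗ[Polynomial R]
      Polynomial R ⊗[R] Pn R P₀ (n-2)) + π4.smulRight uQ + π3.smulRight vQ := ⟨_, rfl⟩
  obtain ⟨Ψ, hΨ⟩ : ∃ x, x = (LinearMap.id : Polynomial R ⊗[R] Pn R P₀ (n-2) →ₗ[Polynomial R]
      Polynomial R ⊗[R] Pn R P₀ (n-2))
      - π4.smulRight ((1 + π3 vQ) • uQ - (π3 uQ) • vQ)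
      - π3.smulRight ((1 + π4 uQ) • vQ - (π4 vQ) • uQ) := ⟨_, rfl⟩
  have hFΨ : F ∘ₗ Ψ = LinearMap.id := by
    apply LinearMap.ext; intro q
    simp only [hF, hΨ, LinearMap.comp_apply, LinearMap.add_apply,
      LinearMap.sub_apply, LinearMap.id_apply, LinearMap.smulRight_apply, map_sub, map_add,
      map_smul, smul_eq_mul]
    match_scalars
    · ring
    · linear_combination (-(π4 q))*hdet
    · linear_combination (-(π3 q))*hdet
  have hΨF : Ψ ∘ₗ F = LinearMap.id := by
    apply LinearMap.ext; intro q
    simp only [hF, hΨ, LinearMap.comp_apply, LinearMap.add_apply,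
      LinearMap.sub_apply, LinearMap.id_apply, LinearMap.smulRight_apply, map_sub, map_add,
      map_smul, smul_eq_mul]
    match_scalars
    · ring
    · linear_combination (-(π4 q))*hdet
    · linear_combination (-(π3 q))*hdet
  -- the key factorization
  have hkey : fT R P₀ (n-2) h0 h1 a k = bcb ∘ₗ F := by
    apply qext; intro y
    have hfT : fT R P₀ (n-2) h0 h1 a k ((1:Polynomial R) ⊗ₜ[R] y)
        = Polynomial.C (b y) + Polynomial.X * (α' * Polynomial.C (projF R P₀ (n-2) i₁ y)) := by
      simp only [fT, LinearMap.add_apply, LinearMap.smul_apply, smul_eq_mul]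
      rw [← hi₀, ← hi₁, ← hα, ← hb, bcMap_tmul, bcMap_tmul, one_mul, one_mul,
        LinearMap.smul_apply, smul_eq_mul, map_mul, ← hα']
    rw [hfT, LinearMap.comp_apply, hF]
    simp only [LinearMap.add_apply, LinearMap.id_apply, LinearMap.smulRight_apply]
    rw [map_add, map_add, map_smul, map_smul, smul_eq_mul, smul_eq_mul, hbcu, hbcv,
      hbcb, bcMap_tmul, one_mul, hπ4, bcMap_tmul, one_mul]
    ring
  have hsurjb : Function.Surjective bcb := by
    intro s
    refine ⟨s • ((1:Polynomial R) ⊗ₜ[R] x'), ?_⟩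
    rw [map_smul, hbcb, bcMap_tmul, one_mul, hbx', map_one, smul_eq_mul, mul_one]
  have hkeyφ : fT R P₀ (n-2) h0 h1 a k
      = bcb ∘ₗ ((LinearEquiv.ofLinear F Ψ hFΨ hΨF :
          Polynomial R ⊗[R] Pn R P₀ (n-2) ≃ₗ[Polynomial R] Polynomial R ⊗[R] Pn R P₀ (n-2)) :
          Polynomial R ⊗[R] Pn R P₀ (n-2) →ₗ[Polynomial R] Polynomial R ⊗[R] Pn R P₀ (n-2)) := by
    rw [show ((LinearEquiv.ofLinear F Ψ hFΨ hΨF :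
        Polynomial R ⊗[R] Pn R P₀ (n-2) ≃ₗ[Polynomial R] Polynomial R ⊗[R] Pn R P₀ (n-2)) :
        Polynomial R ⊗[R] Pn R P₀ (n-2) →ₗ[Polynomial R] Polynomial R ⊗[R] Pn R P₀ (n-2)) = F
      from rfl]
    exact hkey
  have hsurj : Function.Surjective (fT R P₀ (n-2) h0 h1 a k) := by
    rw [hkeyφ, LinearMap.coe_comp]
    exact hsurjb.comp (LinearEquiv.ofLinear F Ψ hFΨ hΨF).surjective
  rw [hbcb, hb, hα, hi₀] at hkeyφ
  exact ⟨hsurj, LinearEquiv.ofLinear F Ψ hFΨ hΨF, hkeyφ⟩
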